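/- arXiv:2407.05896 — 2 statements merged into one kernel-verified Lean document; each statement's English description precedes it below -/
import Mathlib

section
/- Let (X, Y) be a pair of ℕ-valued random variables on a probability space (Ω, 𝓕, P) and (X′, Y′) a pair of ℕ-valued random variables on a probability space (Ω′, 𝓕′, P′), with equal margins: P(X ≤ n) = P′(X′ ≤ n) and P(Y ≤ n) = P′(Y′ ≤ n) for all n ∈ ℕ. Suppose the pairs are PQD-ordered: P(X ≤ s, Y ≤ t) ≤ P′(X′ ≤ s, Y′ ≤ t) for all s, t ∈ ℕ. If X, Y, X·Y, X′·Y′ are integrable, then E[X·Y] − E[X]·E[Y] ≤ E′[X′·Y′] − E′[X′]·E′[Y′]; that is, the PQD order implies the ordering of covariances. -/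
open MeasureTheory

lemma tsum_ite_lt (n : ℕ) : ∑' s : ℕ, (if s < n then (1:ENNReal) else 0) = n := by
  rw [tsum_eq_sum (s := Finset.range n) (by
    intro s hs
    simp only [Finset.mem_range] at hs
    simp [hs])]
  rw [Finset.sum_congr rfl (fun x hx => if_pos (Finset.mem_range.mp hx))]
  simp

lemma meas_nat_set {Ω : Type*} [MeasurableSpace Ω] {X : Ω → ℕ} (hX : Measurable X)
    (S : Set ℕ) : MeasurableSet {w | X w ∈ S} := hX trivial

lemma meas_cast_real {Ω : Type*} [MeasurableSpace Ω] {X : Ω → ℕ} (hX : Measurable X) :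
    Measurable (fun w => (X w : ℝ)) := measurable_from_top.comp hX

lemma incl_excl {Ω : Type*} [MeasurableSpace Ω] (P : Measure Ω) [IsProbabilityMeasure P]
    (A B : Set Ω) (hA : MeasurableSet A) (hB : MeasurableSet B) :
    P (Aᶜ ∩ Bᶜ) + (P A + P B) = 1 + P (A ∩ B) := by
  have h1 : P (A ∪ B) + P (A ∩ B) = P A + P B := measure_union_add_inter A hB
  have h2 : P (A ∪ B) + P (Aᶜ ∩ Bᶜ) = 1 := by
    rw [← Set.compl_union, measure_add_measure_compl (hA.union hB), measure_univ]
  calc P (Aᶜ ∩ Bᶜ) + (P A + P B) = P (Aᶜ ∩ Bᶜ) + (P (A ∪ B) + P (A ∩ B)) := by rw [h1]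
    _ = (P (A ∪ B) + P (Aᶜ ∩ Bᶜ)) + P (A ∩ B) := by ring
    _ = 1 + P (A ∩ B) := by rw [h2]

lemma lint_nat_eq {Ω : Type*} [MeasurableSpace Ω] (P : Measure Ω)
    (X : Ω → ℕ) (hX : Measurable X) :
    ∫⁻ w, (X w : ENNReal) ∂P = ∑' s : ℕ, P {w | s < X w} := by
  have key : ∀ w, (X w : ENNReal) = ∑' s : ℕ, (if s < X w then (1:ENNReal) else 0) :=
    fun w => (tsum_ite_lt (X w)).symm
  simp_rw [key]
  rw [lintegral_tsum (fun s => by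
    apply Measurable.aemeasurable
    exact Measurable.ite (show MeasurableSet {w | s < X w} from hX (show MeasurableSet {m | s < m} from trivial)) measurable_const measurable_const)]
  congr 1
  ext s
  have : ∀ w, (if s < X w then (1:ENNReal) else 0)
      = Set.indicator {w | s < X w} (fun _ => (1:ENNReal)) w := by
    intro w; by_cases h : s < X w <;> simp [Set.indicator_apply, h]
  simp_rw [this]
  exact lintegral_indicator_one (show MeasurableSet {w | s < X w} from hX (show MeasurableSet {m | s < m} from trivial))

lemma lint_nat_mul_eq {Ω : Type*} [MeasurableSpace Ω] (P : Measure Ω)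
    (X Y : Ω → ℕ) (hX : Measurable X) (hY : Measurable Y) :
    ∫⁻ w, (X w : ENNReal) * (Y w : ENNReal) ∂P
      = ∑' s : ℕ, ∑' t : ℕ, P {w | s < X w ∧ t < Y w} := by
  have key : ∀ w, (X w : ENNReal) * (Y w : ENNReal)
      = ∑' s : ℕ, ∑' t : ℕ, (if s < X w ∧ t < Y w then (1:ENNReal) else 0) := by
    intro w
    rw [← tsum_ite_lt (X w), ← tsum_ite_lt (Y w), ← ENNReal.tsum_mul_right]
    congr 1; ext s
    rw [← ENNReal.tsum_mul_left]
    congr 1; ext t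
    by_cases h1 : s < X w <;> by_cases h2 : t < Y w <;> simp [h1, h2]
  simp_rw [key]
  have meas_in : ∀ s t : ℕ, Measurable (fun w => (if s < X w ∧ t < Y w then (1:ENNReal) else 0)) := by
    intro s t
    have : MeasurableSet {w | s < X w ∧ t < Y w} :=
      (meas_nat_set hX {m | s < m}).inter (meas_nat_set hY {m | t < m})
    exact Measurable.ite this measurable_const measurable_const
  rw [lintegral_tsum (fun s => by
    apply Measurable.aemeasurable
    exact Measurable.ennreal_tsum (fun t => meas_in s t))]
  congr 1; ext s
  rw [lintegral_tsum (fun t => (meas_in s t).aemeasurable)]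
  congr 1; ext t
  have : ∀ w, (if s < X w ∧ t < Y w then (1:ENNReal) else 0)
      = Set.indicator {w | s < X w ∧ t < Y w} (fun _ => (1:ENNReal)) w := by
    intro w; by_cases h : s < X w ∧ t < Y w <;> simp [Set.indicator_apply, h]
  simp_rw [this]
  exact lintegral_indicator_one
    (show MeasurableSet {w | s < X w ∧ t < Y w} from
      (hX (show MeasurableSet {m | s < m} from trivial)).inter (hY (show MeasurableSet {m | t < m} from trivial)))

lemma convZ {α : Type*} [MeasurableSpace α] (Q : Measure α) (Z : α → ℕ)
    (hZ : Measurable Z) : ∫ w, (Z w : ℝ) ∂Q = (∫⁻ w, (Z w : ENNReal) ∂Q).toReal := by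
  rw [integral_eq_lintegral_of_nonneg_ae (Filter.Eventually.of_forall fun w => by positivity)
    ((meas_cast_real hZ).aestronglyMeasurable)]
  congr 1
  apply lintegral_congr
  intro w
  rw [ENNReal.ofReal_natCast]

lemma convmul {α : Type*} [MeasurableSpace α] (Q : Measure α) (Z W : α → ℕ)
    (hZ : Measurable Z) (hW : Measurable W) :
    ∫ w, (Z w : ℝ) * (W w : ℝ) ∂Q
      = (∫⁻ w, (Z w : ENNReal) * (W w : ENNReal) ∂Q).toReal := by
  rw [integral_eq_lintegral_of_nonneg_ae (Filter.Eventually.of_forall fun w => by positivity)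
    (show AEStronglyMeasurable (fun w => (Z w : ℝ) * (W w : ℝ)) Q from
      ((meas_cast_real hZ).mul (meas_cast_real hW)).aestronglyMeasurable)]
  congr 1
  apply lintegral_congr
  intro w
  rw [← Nat.cast_mul, ← Nat.cast_mul, ENNReal.ofReal_natCast, Nat.cast_mul]

/-- The PQD order (for ℕ-valued pairs with equal margins) implies the ordering of
covariances. -/
theorem pqd_implies_cov_le {Ω : Type*} [MeasurableSpace Ω]
    (P : Measure Ω) [IsProbabilityMeasure P]
    {Ω' : Type*} [MeasurableSpace Ω'] (P' : Measure Ω') [IsProbabilityMeasure P']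
    (X Y : Ω → ℕ) (X' Y' : Ω' → ℕ)
    (hX : Measurable X) (hY : Measurable Y) (hX' : Measurable X') (hY' : Measurable Y')
    (hmargX : ∀ n : ℕ, P {w | X w ≤ n} = P' {w | X' w ≤ n})
    (hmargY : ∀ n : ℕ, P {w | Y w ≤ n} = P' {w | Y' w ≤ n})
    (hpqd : ∀ s t : ℕ, P {w | X w ≤ s ∧ Y w ≤ t} ≤ P' {w | X' w ≤ s ∧ Y' w ≤ t})
    (hiX : Integrable (fun w => (X w : ℝ)) P)
    (hiY : Integrable (fun w => (Y w : ℝ)) P)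
    (hiXY : Integrable (fun w => (X w : ℝ) * (Y w : ℝ)) P)
    (hiXY' : Integrable (fun w => (X' w : ℝ) * (Y' w : ℝ)) P') :
    ∫ w, (X w : ℝ) * (Y w : ℝ) ∂P - (∫ w, (X w : ℝ) ∂P) * (∫ w, (Y w : ℝ) ∂P)
      ≤ ∫ w, (X' w : ℝ) * (Y' w : ℝ) ∂P'
          - (∫ w, (X' w : ℝ) ∂P') * (∫ w, (Y' w : ℝ) ∂P') := by
  -- termwise inequality on survival functions
  have hterm : ∀ s t : ℕ, P {w | s < X w ∧ t < Y w} ≤ P' {w | s < X' w ∧ t < Y' w} := by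
    intro s t
    have hset : {w | s < X w ∧ t < Y w} = {w | X w ≤ s}ᶜ ∩ {w | Y w ≤ t}ᶜ := by
      ext w; simp [not_le]
    have hset' : {w | s < X' w ∧ t < Y' w} = {w | X' w ≤ s}ᶜ ∩ {w | Y' w ≤ t}ᶜ := by
      ext w; simp [not_le]
    have hAB : {w | X w ≤ s} ∩ {w | Y w ≤ t} = {w | X w ≤ s ∧ Y w ≤ t} := rfl
    have hAB' : {w | X' w ≤ s} ∩ {w | Y' w ≤ t} = {w | X' w ≤ s ∧ Y' w ≤ t} := rfl
    have h1 := incl_excl P {w | X w ≤ s} {w | Y w ≤ t}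
      (show MeasurableSet {w | X w ≤ s} from hX (show MeasurableSet {m | m ≤ s} from trivial))
      (show MeasurableSet {w | Y w ≤ t} from hY (show MeasurableSet {m | m ≤ t} from trivial))
    have h2 := incl_excl P' {w | X' w ≤ s} {w | Y' w ≤ t}
      (show MeasurableSet {w | X' w ≤ s} from hX' (show MeasurableSet {m | m ≤ s} from trivial))
      (show MeasurableSet {w | Y' w ≤ t} from hY' (show MeasurableSet {m | m ≤ t} from trivial))
    rw [hAB] at h1; rw [hAB'] at h2
    rw [hset, hset']
    have hfin : P {w | X w ≤ s} + P {w | Y w ≤ t} ≠ ⊤ :=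
      (ENNReal.add_ne_top).2 ⟨measure_ne_top _ _, measure_ne_top _ _⟩
    rw [← ENNReal.add_le_add_iff_right hfin, h1, hmargX s, hmargY t, h2]
    exact add_le_add le_rfl (hpqd s t)
  -- lintegral inequality for products
  have hlin : ∫⁻ w, (X w : ENNReal) * (Y w : ENNReal) ∂P
      ≤ ∫⁻ w, (X' w : ENNReal) * (Y' w : ENNReal) ∂P' := by
    rw [lint_nat_mul_eq P X Y hX hY, lint_nat_mul_eq P' X' Y' hX' hY']
    exact ENNReal.tsum_le_tsum fun s => ENNReal.tsum_le_tsum fun t => hterm s t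
  -- equal margins give equal expectations (lintegral level)
  have hsurvX : ∀ s : ℕ, P {w | s < X w} = P' {w | s < X' w} := by
    intro s
    have h1 : {w | s < X w} = {w | X w ≤ s}ᶜ := by ext w; simp [not_le]
    have h1' : {w | s < X' w} = {w | X' w ≤ s}ᶜ := by ext w; simp [not_le]
    rw [h1, h1',
      prob_compl_eq_one_sub (show MeasurableSet {w | X w ≤ s} from hX (show MeasurableSet {m | m ≤ s} from trivial)),
      prob_compl_eq_one_sub (show MeasurableSet {w | X' w ≤ s} from hX' (show MeasurableSet {m | m ≤ s} from trivial)), hmargX s]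
  have hsurvY : ∀ s : ℕ, P {w | s < Y w} = P' {w | s < Y' w} := by
    intro s
    have h1 : {w | s < Y w} = {w | Y w ≤ s}ᶜ := by ext w; simp [not_le]
    have h1' : {w | s < Y' w} = {w | Y' w ≤ s}ᶜ := by ext w; simp [not_le]
    rw [h1, h1',
      prob_compl_eq_one_sub (show MeasurableSet {w | Y w ≤ s} from hY (show MeasurableSet {m | m ≤ s} from trivial)),
      prob_compl_eq_one_sub (show MeasurableSet {w | Y' w ≤ s} from hY' (show MeasurableSet {m | m ≤ s} from trivial)), hmargY s]
  have hEXlin : ∫⁻ w, (X w : ENNReal) ∂P = ∫⁻ w, (X' w : ENNReal) ∂P' := by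
    rw [lint_nat_eq P X hX, lint_nat_eq P' X' hX']
    exact tsum_congr hsurvX
  have hEYlin : ∫⁻ w, (Y w : ENNReal) ∂P = ∫⁻ w, (Y' w : ENNReal) ∂P' := by
    rw [lint_nat_eq P Y hY, lint_nat_eq P' Y' hY']
    exact tsum_congr hsurvY
  -- finiteness of the primed product lintegral
  have hfin' : ∫⁻ w, (X' w : ENNReal) * (Y' w : ENNReal) ∂P' ≠ ⊤ := by
    have h := hiXY'.hasFiniteIntegral
    rw [hasFiniteIntegral_iff_norm] at h
    refine ne_of_lt (lt_of_le_of_lt (le_of_eq ?_) h)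
    apply lintegral_congr
    intro w
    rw [Real.norm_of_nonneg (by positivity), ← Nat.cast_mul, ← Nat.cast_mul,
      ENNReal.ofReal_natCast, Nat.cast_mul]
  -- expectations equal in ℝ
  have hEX : ∫ w, (X w : ℝ) ∂P = ∫ w, (X' w : ℝ) ∂P' := by
    rw [convZ P X hX, convZ P' X' hX', hEXlin]
  have hEY : ∫ w, (Y w : ℝ) ∂P = ∫ w, (Y' w : ℝ) ∂P' := by
    rw [convZ P Y hY, convZ P' Y' hY', hEYlin]
  have hprod : ∫ w, (X w : ℝ) * (Y w : ℝ) ∂P ≤ ∫ w, (X' w : ℝ) * (Y' w : ℝ) ∂P' := by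
    rw [convmul P X Y hX hY, convmul P' X' Y' hX' hY']
    exact ENNReal.toReal_mono hfin' hlin
  rw [hEX, hEY]
  linarith
end

section
/- Let a ≥ 0 and 0 ≤ b ≤ b′. Then the covariance of the comonotonic Poisson pair with means a and b is at most that of the comonotonic Poisson pair with means a and b′: ∫ q_a(u)·q_b(u) dμ(u) − a·b ≤ ∫ q_a(u)·q_{b′}(u) dμ(u) − a·b′. In particular, for fixed a, the comonotonic Poisson covariance b ↦ cov(q_a(U), q_b(U)) is nondecreasing in b. -/
open MeasureTheory

/-- The uniform probability measure on the open interval (0,1):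
Lebesgue measure restricted to (0,1). -/
noncomputable def unif : Measure ℝ := volume.restrict (Set.Ioo (0 : ℝ) 1)

/-- The quantile transform of a cdf `F` on ℕ: `q_F(u) = min {n : u ≤ F n}`. -/
noncomputable def qt (F : ℕ → ℝ) (u : ℝ) : ℕ := sInf {n : ℕ | u ≤ F n}

/-- The Poisson(λ) cumulative distribution function on ℕ. -/
noncomputable def poisCdf (l : ℝ) (n : ℕ) : ℝ :=
  ∑ k ∈ Finset.range (n + 1), Real.exp (-l) * l ^ k / (Nat.factorial k)

/-- The Poisson(λ) probability mass function on ℕ. -/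
noncomputable def poisPmf (l : ℝ) (n : ℕ) : ℝ :=
  Real.exp (-l) * l ^ n / (Nat.factorial n)

/-- `F(n-1)` with the convention `F(-1) = 0`. -/
noncomputable def cdfm1 (F : ℕ → ℝ) (n : ℕ) : ℝ := if n = 0 then 0 else F (n - 1)

open scoped ENNReal

/-- survival function: P(X > n) -/
noncomputable def sv (l : ℝ) (n : ℕ) : ℝ := 1 - poisCdf l n

lemma poisCdf_eq_sum (l : ℝ) (n : ℕ) :
    poisCdf l n = ∑ k ∈ Finset.range (n + 1), poisPmf l k := rfl

lemma poisPmf_nonneg {l : ℝ} (hl : 0 ≤ l) (n : ℕ) : 0 ≤ poisPmf l n := by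
  unfold poisPmf
  positivity

lemma poisPmf_pos {l : ℝ} (hl : 0 < l) (n : ℕ) : 0 < poisPmf l n := by
  unfold poisPmf
  positivity

lemma hasSum_poisPmf (l : ℝ) : HasSum (poisPmf l) 1 := by
  have h1 := Real.summable_pow_div_factorial l
  have h2 : ∑' n : ℕ, l ^ n / (Nat.factorial n) = Real.exp l := by
    rw [Real.exp_eq_exp_ℝ, NormedSpace.exp_eq_tsum_div]
  have h3 : HasSum (fun n : ℕ => l ^ n / (Nat.factorial n)) (Real.exp l) := h2 ▸ h1.hasSum
  have h4 := h3.mul_left (Real.exp (-l))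
  have : (fun n : ℕ => Real.exp (-l) * (l ^ n / (Nat.factorial n))) = poisPmf l := by
    funext n; unfold poisPmf; ring
  rw [this] at h4
  rwa [← Real.exp_add, neg_add_cancel, Real.exp_zero] at h4

lemma summable_poisPmf (l : ℝ) : Summable (poisPmf l) := (hasSum_poisPmf l).summable

lemma tsum_poisPmf (l : ℝ) : ∑' n, poisPmf l n = 1 := (hasSum_poisPmf l).tsum_eq

lemma poisCdf_le_one {l : ℝ} (hl : 0 ≤ l) (n : ℕ) : poisCdf l n ≤ 1 := by
  rw [poisCdf_eq_sum, ← tsum_poisPmf l]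
  exact Summable.sum_le_tsum _ (fun k _ => poisPmf_nonneg hl k) (summable_poisPmf l)

lemma poisCdf_pos {l : ℝ} (hl : 0 ≤ l) (n : ℕ) : 0 < poisCdf l n := by
  rw [poisCdf_eq_sum]
  apply Finset.sum_pos'
  · exact fun k _ => poisPmf_nonneg hl k
  · refine ⟨0, Finset.mem_range.2 (Nat.succ_pos n), ?_⟩
    unfold poisPmf
    simp only [pow_zero, Nat.factorial_zero]
    positivity

lemma poisCdf_mono {l : ℝ} (hl : 0 ≤ l) : Monotone (poisCdf l) := by
  apply monotone_nat_of_le_succ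
  intro n
  rw [poisCdf_eq_sum, poisCdf_eq_sum, Finset.sum_range_succ (n := n + 1)]
  exact le_add_of_nonneg_right (poisPmf_nonneg hl _)

lemma sv_nonneg {l : ℝ} (hl : 0 ≤ l) (n : ℕ) : 0 ≤ sv l n :=
  sub_nonneg.2 (poisCdf_le_one hl n)

lemma sv_lt_one {l : ℝ} (hl : 0 ≤ l) (n : ℕ) : sv l n < 1 := by
  unfold sv; linarith [poisCdf_pos hl n]

lemma sv_antitone {l : ℝ} (hl : 0 ≤ l) : Antitone (sv l) := by
  intro m n h
  unfold sv
  linarith [poisCdf_mono hl h]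

lemma sv_eq_tsum {l : ℝ} (n : ℕ) : sv l n = ∑' j, poisPmf l (n + 1 + j) := by
  have := (Summable.sum_add_tsum_nat_add (f := poisPmf l) (n + 1) (summable_poisPmf l)).symm
  rw [tsum_poisPmf l] at this
  unfold sv
  rw [poisCdf_eq_sum]
  have h2 : ∑' j, poisPmf l (n + 1 + j) = ∑' j, poisPmf l (j + (n + 1)) := by
    congr 1; funext j; congr 1; omega
  rw [h2]; linarith [this]

lemma summable_shift (l : ℝ) (n : ℕ) : Summable (fun j => poisPmf l (n + j)) := by
  have := (summable_nat_add_iff (f := poisPmf l) n).2 (summable_poisPmf l)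
  exact this.congr (fun j => by congr 1; omega)

lemma sv_succ_le {l : ℝ} (hl : 0 ≤ l) (n : ℕ) :
    sv l (n + 1) ≤ l / (n + 2) * sv l n := by
  rw [sv_eq_tsum, sv_eq_tsum, ← tsum_mul_left]
  apply Summable.tsum_le_tsum _ _ _
  · intro j
    have h1 : poisPmf l (n + 1 + 1 + j) = l / (n + 2 + j) * poisPmf l (n + 1 + j) := by
      unfold poisPmf
      have : (n + 1 + 1 + j) = (n + 1 + j) + 1 := by omega
      rw [this, pow_succ, Nat.factorial_succ]
      push_cast
      have h2 : (0:ℝ) < (n + 1 + j : ℕ) + 1 := by positivity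
      field_simp
      ring
    rw [h1]
    apply mul_le_mul_of_nonneg_right _ (poisPmf_nonneg hl _)
    · apply div_le_div_of_nonneg_left hl (by positivity)
      push_cast; linarith [Nat.cast_nonneg (α := ℝ) j]
  · exact (summable_shift l (n + 2)).congr (fun j => by congr 1 <;> omega)
  · exact ((summable_shift l (n + 1)).congr (fun j => by congr 1 <;> omega)).mul_left _

lemma summable_sqrt_sv {l : ℝ} (hl : 0 ≤ l) : Summable (fun n => Real.sqrt (sv l n)) := by
  apply summable_of_ratio_norm_eventually_le (r := 1/2) (by norm_num)
  filter_upwards [Filter.eventually_ge_atTop (⌈4 * l⌉₊)] with n hn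
  have h1 : sv l (n + 1) ≤ 1/4 * sv l n := by
    calc sv l (n + 1) ≤ l / (n + 2) * sv l n := sv_succ_le hl n
    _ ≤ 1/4 * sv l n := by
        apply mul_le_mul_of_nonneg_right _ (sv_nonneg hl n)
        rw [div_le_iff₀ (by positivity)]
        have : 4 * l ≤ n + 1 := by
          calc 4 * l ≤ (⌈4 * l⌉₊ : ℝ) := Nat.le_ceil _
          _ ≤ n := by exact_mod_cast hn
          _ ≤ n + 1 := by linarith
        linarith
  rw [Real.norm_eq_abs, Real.norm_eq_abs, abs_of_nonneg (Real.sqrt_nonneg _),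
    abs_of_nonneg (Real.sqrt_nonneg _)]
  calc Real.sqrt (sv l (n + 1)) ≤ Real.sqrt (1/4 * sv l n) := Real.sqrt_le_sqrt h1
  _ = 1/2 * Real.sqrt (sv l n) := by
      rw [show (1:ℝ)/4 = (1/2)^2 by norm_num, Real.sqrt_mul (by positivity),
        Real.sqrt_sq (by norm_num)]

lemma summable_sv {l : ℝ} (hl : 0 ≤ l) : Summable (sv l) := by
  apply (summable_sqrt_sv hl).of_nonneg_of_le (fun n => sv_nonneg hl n)
  intro n
  have hs := Real.sq_sqrt (sv_nonneg hl n)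
  have h0 := Real.sqrt_nonneg (sv l n)
  have h1 := sv_lt_one hl n
  nlinarith [sq_nonneg (1 - Real.sqrt (sv l n))]

lemma tendsto_sv {l : ℝ} (hl : 0 ≤ l) : Filter.Tendsto (sv l) Filter.atTop (nhds 0) :=
  (summable_sv hl).tendsto_atTop_zero

lemma summable_id_mul_poisPmf {l : ℝ} (hl : 0 ≤ l) :
    Summable (fun k : ℕ => (k : ℝ) * poisPmf l k) := by
  rw [← summable_nat_add_iff 1]
  have : (fun k : ℕ => ((k + 1 : ℕ) : ℝ) * poisPmf l (k + 1)) = fun k => l * poisPmf l k := by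
    funext k
    unfold poisPmf
    rw [pow_succ, Nat.factorial_succ]
    push_cast
    have h2 : (0:ℝ) < (k:ℝ) + 1 := by positivity
    have h3 : (Nat.factorial k : ℝ) ≠ 0 := by positivity
    field_simp
  rw [this]
  exact (summable_poisPmf l).mul_left _

lemma tsum_id_mul_poisPmf {l : ℝ} (hl : 0 ≤ l) :
    ∑' k : ℕ, (k : ℝ) * poisPmf l k = l := by
  rw [Summable.tsum_eq_zero_add (summable_id_mul_poisPmf hl)]
  have : (fun k : ℕ => ((k + 1 : ℕ) : ℝ) * poisPmf l (k + 1)) = fun k => l * poisPmf l k := by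
    funext k
    unfold poisPmf
    rw [pow_succ, Nat.factorial_succ]
    push_cast
    have h2 : (0:ℝ) < (k:ℝ) + 1 := by positivity
    have h3 : (Nat.factorial k : ℝ) ≠ 0 := by positivity
    field_simp
  push_cast at this ⊢
  rw [this, tsum_mul_left, tsum_poisPmf l]
  simp

lemma tsum_sv {l : ℝ} (hl : 0 ≤ l) : ∑' n, sv l n = l := by
  classical
  set f : ℕ → ℕ → ℝ := fun n k => if n < k then poisPmf l k else 0 with hf
  have hrow : ∀ n, Summable (f n) := by
    intro n
    apply (summable_poisPmf l).of_nonneg_of_le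
    · intro k; by_cases h : n < k <;> simp [f, h, poisPmf_nonneg hl k]
    · intro k; by_cases h : n < k <;> simp [f, h, poisPmf_nonneg hl k]
  have hrowsum : ∀ n, ∑' k, f n k = sv l n := by
    intro n
    rw [← Summable.sum_add_tsum_nat_add (n + 1) (hrow n)]
    have h1 : ∑ k ∈ Finset.range (n + 1), f n k = 0 := by
      apply Finset.sum_eq_zero
      intro k hk
      simp only [Finset.mem_range] at hk
      exact if_neg (by omega)
    have h2 : ∀ j : ℕ, f n (j + (n + 1)) = poisPmf l (n + 1 + j) := by
      intro j
      have : f n (j + (n + 1)) = poisPmf l (j + (n + 1)) := if_pos (by omega)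
      rw [this]
      congr 1
      omega
    rw [h1, zero_add, tsum_congr h2, ← sv_eq_tsum]
  have hcol : ∀ k, Summable (fun n => f n k) := by
    intro k
    apply summable_of_finite_support
    apply Set.Finite.subset (Set.finite_Iio k)
    intro n hn
    simp only [Function.mem_support] at hn
    by_contra h
    simp only [Set.mem_Iio, not_lt] at h
    exact hn (if_neg (by omega))
  have hcolsum : ∀ k, ∑' n, f n k = (k : ℝ) * poisPmf l k := by
    intro k
    have h1 : ∀ n ∉ Finset.range k, f n k = 0 := by
      intro n hn
      simp only [Finset.mem_range, not_lt] at hn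
      exact if_neg (by omega)
    rw [tsum_eq_sum h1]
    have h2 : ∀ n ∈ Finset.range k, f n k = poisPmf l k := by
      intro n hn
      simp only [Finset.mem_range] at hn
      exact if_pos hn
    rw [Finset.sum_congr rfl h2, Finset.sum_const, Finset.card_range, nsmul_eq_mul]
  have huncurry : Summable (Function.uncurry f) := by
    apply (summable_prod_of_nonneg ?_).2
    · constructor
      · exact fun n => hrow n
      · apply (summable_sv hl).congr
        intro n
        exact (hrowsum n).symm
    · intro p
      rcases p with ⟨n, k⟩
      by_cases h : n < k <;> simp [Function.uncurry, f, h, poisPmf_nonneg hl k]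
  calc ∑' n, sv l n = ∑' n, ∑' k, f n k := by rw [tsum_congr (fun n => (hrowsum n).symm)]
  _ = ∑' k, ∑' n, f n k := (Summable.tsum_comm' huncurry hrow hcol).symm
  _ = ∑' k : ℕ, (k:ℝ) * poisPmf l k := tsum_congr fun k => hcolsum k
  _ = l := tsum_id_mul_poisPmf hl

lemma hasDerivAt_poisPmf_zero (r : ℝ) :
    HasDerivAt (fun t => poisPmf t 0) (-poisPmf r 0) r := by
  have hexp : HasDerivAt (fun t : ℝ => Real.exp (-t)) (-Real.exp (-r)) r := by
    have h1 := (Real.hasDerivAt_exp (-r)).comp r (hasDerivAt_neg r)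
    exact h1.congr_deriv (by simp)
  have : (fun t : ℝ => poisPmf t 0) = fun t => Real.exp (-t) * t ^ 0 / (Nat.factorial 0 : ℝ) := rfl
  rw [this]
  simp only [pow_zero, Nat.factorial_zero, Nat.cast_one, mul_one, div_one]
  convert hexp using 1
  unfold poisPmf
  simp

lemma hasDerivAt_poisPmf_succ (n : ℕ) (r : ℝ) :
    HasDerivAt (fun t => poisPmf t (n + 1)) (poisPmf r n - poisPmf r (n + 1)) r := by
  have hexp : HasDerivAt (fun t : ℝ => Real.exp (-t)) (-Real.exp (-r)) r := by
    have h1 := (Real.hasDerivAt_exp (-r)).comp r (hasDerivAt_neg r)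
    exact h1.congr_deriv (by simp)
  have hpow : HasDerivAt (fun t : ℝ => t ^ (n + 1)) ((n + 1 : ℕ) * r ^ n) r := by
    simpa using hasDerivAt_pow (n + 1) r
  have h := (hexp.mul hpow).div_const (Nat.factorial (n + 1) : ℝ)
  have heq : (fun t : ℝ => Real.exp (-t) * t ^ (n + 1) / (Nat.factorial (n + 1) : ℝ))
      = fun t => poisPmf t (n + 1) := rfl
  change HasDerivAt (fun t => poisPmf t (n + 1)) _ r at h
  convert h using 1
  unfold poisPmf
  rw [Nat.factorial_succ]
  have h2 : (0:ℝ) < (n:ℝ) + 1 := by positivity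
  have h3 : (Nat.factorial n : ℝ) ≠ 0 := by positivity
  push_cast
  field_simp
  ring

lemma hasDerivAt_poisCdf (n : ℕ) (r : ℝ) :
    HasDerivAt (fun t => poisCdf t n) (-poisPmf r n) r := by
  induction n with
  | zero =>
    have : (fun t : ℝ => poisCdf t 0) = fun t => poisPmf t 0 := by
      funext t; rw [poisCdf_eq_sum]; simp
    rw [this]
    exact hasDerivAt_poisPmf_zero r
  | succ n ih =>
    have : (fun t : ℝ => poisCdf t (n + 1)) = fun t => poisCdf t n + poisPmf t (n + 1) := by
      funext t; rw [poisCdf_eq_sum, poisCdf_eq_sum, Finset.sum_range_succ]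
    rw [this]
    have h := ih.fun_add (hasDerivAt_poisPmf_succ n r)
    exact h.congr_deriv (by ring)

lemma poisCdf_anti_l (n : ℕ) : AntitoneOn (fun t => poisCdf t n) (Set.Ici 0) := by
  apply antitoneOn_of_deriv_nonpos (convex_Ici 0)
  · exact Continuous.continuousOn
      (continuous_iff_continuousAt.2 (fun r => (hasDerivAt_poisCdf n r).continuousAt))
  · intro r _
    exact (hasDerivAt_poisCdf n r).differentiableAt.differentiableWithinAt
  · intro r hr
    rw [interior_Ici] at hr
    rw [(hasDerivAt_poisCdf n r).deriv]
    simp only [neg_nonpos]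
    exact poisPmf_nonneg (le_of_lt hr) n

lemma sv_mono_l {s t : ℝ} (hs : 0 ≤ s) (hst : s ≤ t) (n : ℕ) : sv s n ≤ sv t n := by
  unfold sv
  have := poisCdf_anti_l n (Set.mem_Ici.2 hs) (Set.mem_Ici.2 (hs.trans hst)) hst
  linarith

noncomputable def gfun (x : ℝ) (k : ℕ) (t : ℝ) : ℝ :=
  k * x + (t - k) + (∑ n ∈ Finset.range k, poisCdf t n) - x * t

noncomputable def kk (x t : ℝ) : ℕ := sInf {n | sv t n ≤ x}

noncomputable def hfun (x t : ℝ) : ℝ := (∑' n, min x (sv t n)) - x * t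

lemma kk_spec {x t : ℝ} (hx : 0 < x) (ht : 0 ≤ t) : sv t (kk x t) ≤ x := by
  have hne : {n | sv t n ≤ x}.Nonempty := by
    have := (tendsto_sv ht).eventually_le_const hx
    rcases this.exists with ⟨n, hn⟩
    exact ⟨n, hn⟩
  exact Nat.sInf_mem hne

lemma kk_lt {x t : ℝ} (ht : 0 ≤ t) {n : ℕ} (hn : n < kk x t) : x < sv t n := by
  have := Nat.notMem_of_lt_sInf hn
  simp only [Set.mem_setOf_eq, not_le] at this
  exact this

lemma kk_ge {x t : ℝ} (hx : 0 < x) (ht : 0 ≤ t) {n : ℕ} (hn : kk x t ≤ n) : sv t n ≤ x :=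
  le_trans (sv_antitone ht hn) (kk_spec hx ht)

lemma kk_le {x t : ℝ} {n : ℕ} (hn : sv t n ≤ x) : kk x t ≤ n := Nat.sInf_le hn

lemma summable_min {x t : ℝ} (hx : 0 ≤ x) (ht : 0 ≤ t) :
    Summable (fun n => min x (sv t n)) := by
  apply (summable_sv ht).of_nonneg_of_le
  · exact fun n => le_min hx (sv_nonneg ht n)
  · exact fun n => min_le_right _ _

lemma sum_range_sv {t : ℝ} (k : ℕ) :
    ∑ n ∈ Finset.range k, sv t n = k - ∑ n ∈ Finset.range k, poisCdf t n := by
  unfold sv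
  rw [Finset.sum_sub_distrib]
  simp

lemma tsum_tail_sv {t : ℝ} (ht : 0 ≤ t) (k : ℕ) :
    ∑' j, sv t (j + k) = t - ∑ n ∈ Finset.range k, sv t n := by
  have := Summable.sum_add_tsum_nat_add (f := sv t) k (summable_sv ht)
  rw [tsum_sv ht] at this
  linarith

lemma hfun_le {x t : ℝ} (hx : 0 ≤ x) (ht : 0 ≤ t) (k : ℕ) :
    hfun x t ≤ gfun x k t := by
  unfold hfun gfun
  have hsplit := Summable.sum_add_tsum_nat_add (f := fun n => min x (sv t n)) k (summable_min hx ht)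
  rw [← hsplit]
  have h1 : ∑ n ∈ Finset.range k, min x (sv t n) ≤ k * x := by
    calc ∑ n ∈ Finset.range k, min x (sv t n) ≤ ∑ n ∈ Finset.range k, x :=
      Finset.sum_le_sum (fun n _ => min_le_left _ _)
    _ = k * x := by rw [Finset.sum_const, Finset.card_range, nsmul_eq_mul]
  have h2 : ∑' j, min x (sv t (j + k)) ≤ ∑' j, sv t (j + k) := by
    apply Summable.tsum_le_tsum (fun j => min_le_right _ _)
    · exact (summable_nat_add_iff k).2 (summable_min hx ht)
    · exact (summable_nat_add_iff k).2 (summable_sv ht)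
  have h3 := tsum_tail_sv ht k
  have h4 := sum_range_sv (t := t) k
  linarith

lemma hfun_eq {x t : ℝ} (hx : 0 < x) (ht : 0 ≤ t) :
    hfun x t = gfun x (kk x t) t := by
  unfold hfun gfun
  set k := kk x t with hk
  have hsplit := Summable.sum_add_tsum_nat_add (f := fun n => min x (sv t n)) k (summable_min hx.le ht)
  rw [← hsplit]
  have h1 : ∑ n ∈ Finset.range k, min x (sv t n) = k * x := by
    rw [Finset.sum_congr rfl (fun n hn => by
      simp only [Finset.mem_range] at hn
      exact min_eq_left (le_of_lt (kk_lt ht hn)))]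
    rw [Finset.sum_const, Finset.card_range, nsmul_eq_mul]
  have h2 : ∑' j, min x (sv t (j + k)) = ∑' j, sv t (j + k) := by
    apply tsum_congr
    intro j
    exact min_eq_right (kk_ge hx ht (by omega))
  have h3 := tsum_tail_sv ht k
  have h4 := sum_range_sv (t := t) k
  rw [h1, h2]
  linarith

lemma hasDerivAt_gfun (x : ℝ) (k : ℕ) (t : ℝ) :
    HasDerivAt (gfun x k) ((1 - x) - ∑ n ∈ Finset.range k, poisPmf t n) t := by
  unfold gfun
  have h1 : HasDerivAt (fun t : ℝ => ∑ n ∈ Finset.range k, poisCdf t n)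
      (∑ n ∈ Finset.range k, -poisPmf t n) t :=
    HasDerivAt.fun_sum (fun n _ => hasDerivAt_poisCdf n t)
  have h2 : HasDerivAt (fun r : ℝ => (k : ℝ) * x + (r - k)) 1 t := by
    simpa using ((hasDerivAt_id t).sub_const (k:ℝ)).const_add ((k:ℝ)*x)
  have h3 : HasDerivAt (fun r : ℝ => x * r) x t := by
    simpa using (hasDerivAt_id t).const_mul x
  have h := (h2.fun_add h1).fun_sub h3
  exact h.congr_deriv (by rw [Finset.sum_neg_distrib]; ring)

lemma gfun_mono {x : ℝ} (k : ℕ) {s t : ℝ} (hst : s ≤ t)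
    (hd : ∀ r ∈ Set.Icc s t, 0 ≤ (1 - x) - ∑ n ∈ Finset.range k, poisPmf r n) :
    gfun x k s ≤ gfun x k t := by
  apply monotoneOn_of_deriv_nonneg (convex_Icc s t)
    (Continuous.continuousOn (continuous_iff_continuousAt.2
      (fun r => (hasDerivAt_gfun x k r).continuousAt)))
    (fun r hr => (hasDerivAt_gfun x k r).differentiableAt.differentiableWithinAt)
    ?_ (Set.left_mem_Icc.2 hst) (Set.right_mem_Icc.2 hst) hst
  intro r hr
  rw [interior_Icc] at hr
  rw [(hasDerivAt_gfun x k r).deriv]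
  exact hd r (Set.mem_Icc.2 ⟨le_of_lt hr.1, le_of_lt hr.2⟩)

lemma continuous_sv (n : ℕ) : Continuous (fun t => sv t n) := by
  unfold sv
  exact continuous_const.sub
    (continuous_iff_continuousAt.2 (fun r => (hasDerivAt_poisCdf n r).continuousAt))

lemma gd_eq_sv {x r : ℝ} {k : ℕ} (hk : 1 ≤ k) :
    (1 - x) - ∑ n ∈ Finset.range k, poisPmf r n = sv r (k - 1) - x := by
  have : ∑ n ∈ Finset.range k, poisPmf r n = poisCdf r (k - 1) := by
    rw [poisCdf_eq_sum, show k - 1 + 1 = k from by omega]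
  rw [this]
  unfold sv
  ring

/-- The key monotonicity lemma. -/
lemma key_mono {x : ℝ} (hx0 : 0 < x) (hx1 : x ≤ 1) :
    ∀ K : ℕ, ∀ s t : ℝ, 0 ≤ s → s ≤ t → kk x t = K → hfun x s ≤ hfun x t := by
  intro K
  induction K using Nat.strong_induction_on with
  | _ K ih =>
    intro s t hs hst hK
    have ht : 0 ≤ t := hs.trans hst
    rcases Nat.eq_zero_or_pos K with hK0 | hKpos
    · -- K = 0 : hfun t = gfun x 0 t = (1-x) t
      have hgt : hfun x t = gfun x 0 t := by rw [hfun_eq hx0 ht, hK, hK0]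
      have : gfun x 0 s ≤ gfun x 0 t := by
        apply gfun_mono 0 hst
        intro r _
        simp only [Finset.range_zero, Finset.sum_empty]
        linarith
      calc hfun x s ≤ gfun x 0 s := hfun_le hx0.le hs 0
      _ ≤ gfun x 0 t := this
      _ = hfun x t := hgt.symm
    · -- K ≥ 1
      have hgt : hfun x t = gfun x K t := by rw [hfun_eq hx0 ht, hK]
      by_cases hw : x ≤ sv s (K - 1)
      · -- monotone piece on [s, t]
        have : gfun x K s ≤ gfun x K t := by
          apply gfun_mono K hst
          intro r hr
          rw [gd_eq_sv hKpos]
          have := sv_mono_l hs hr.1 (K - 1)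
          linarith
        calc hfun x s ≤ gfun x K s := hfun_le hx0.le hs K
        _ ≤ gfun x K t := this
        _ = hfun x t := hgt.symm
      · -- crossing : find u with sv u (K-1) = x
        push_neg at hw
        have hxt : x < sv t (K - 1) := by
          apply kk_lt ht
          omega
        have hcont : ContinuousOn (fun r => sv r (K - 1)) (Set.Icc s t) :=
          (continuous_sv (K - 1)).continuousOn
        have hmem : x ∈ Set.Icc (sv s (K-1)) (sv t (K-1)) := ⟨hw.le, hxt.le⟩
        obtain ⟨u, hu, hux⟩ := intermediate_value_Icc hst hcont hmem
        have hu0 : 0 ≤ u := hs.trans hu.1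
        have hkku : kk x u < K := by
          have h1 : kk x u ≤ K - 1 := kk_le (le_of_eq hux)
          omega
        have h1 : hfun x s ≤ hfun x u := ih (kk x u) hkku s u hs hu.1 rfl
        have h2 : hfun x u ≤ hfun x t := by
          have : gfun x K u ≤ gfun x K t := by
            apply gfun_mono K hu.2
            intro r hr
            rw [gd_eq_sv hKpos]
            have := sv_mono_l hu0 hr.1 (K - 1)
            linarith
          calc hfun x u ≤ gfun x K u := hfun_le hx0.le hu0 K
          _ ≤ gfun x K t := this
          _ = hfun x t := hgt.symm
        linarith

lemma key_mono' {x s t : ℝ} (hx0 : 0 < x) (hx1 : x ≤ 1) (hs : 0 ≤ s) (hst : s ≤ t) :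
    hfun x s ≤ hfun x t :=
  key_mono hx0 hx1 (kk x t) s t hs hst rfl

lemma tendsto_poisCdf {l : ℝ} (hl : 0 ≤ l) :
    Filter.Tendsto (poisCdf l) Filter.atTop (nhds 1) := by
  have h := (tendsto_sv hl).const_sub 1
  simp only [sub_zero] at h
  have : (fun n => 1 - sv l n) = poisCdf l := by
    funext n; unfold sv; ring
  rwa [this] at h

lemma qt_gt_iff {F : ℕ → ℝ} (hF : Monotone F) (m : ℕ) :
    {u : ℝ | m < qt F u} = Set.Ioi (F m) ∩ ⋃ n, Set.Iic (F n) := by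
  ext u
  simp only [Set.mem_setOf_eq, Set.mem_inter_iff, Set.mem_Ioi, Set.mem_iUnion, Set.mem_Iic]
  constructor
  · intro h
    have hne : {n : ℕ | u ≤ F n}.Nonempty := by
      by_contra hc
      rw [Set.not_nonempty_iff_eq_empty] at hc
      unfold qt at h
      rw [hc, Nat.sInf_empty] at h
      omega
    have hmem := Nat.sInf_mem hne
    refine ⟨?_, ⟨qt F u, hmem⟩⟩
    by_contra hc
    push_neg at hc
    have : qt F u ≤ m := Nat.sInf_le hc
    omega
  · rintro ⟨h1, n, hn⟩
    have hne : {k : ℕ | u ≤ F k}.Nonempty := ⟨n, hn⟩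
    by_contra hc
    push_neg at hc
    have hmem := Nat.sInf_mem hne
    have : u ≤ F (qt F u) := hmem
    have : u ≤ F m := this.trans (hF hc)
    linarith

lemma measurableSet_qt_gt {F : ℕ → ℝ} (hF : Monotone F) (m : ℕ) :
    MeasurableSet {u : ℝ | m < qt F u} := by
  rw [qt_gt_iff hF]
  exact (measurableSet_Ioi).inter (MeasurableSet.iUnion (fun n => measurableSet_Iic))

lemma unif_inter_eq {a b : ℝ} (ha : 0 ≤ a) (hb : 0 ≤ b) (m n : ℕ) :
    ({u : ℝ | m < qt (poisCdf a) u} ∩ {u : ℝ | n < qt (poisCdf b) u}) ∩ Set.Ioo 0 1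
      = Set.Ioo (max (poisCdf a m) (poisCdf b n)) 1 := by
  rw [qt_gt_iff (poisCdf_mono ha), qt_gt_iff (poisCdf_mono hb)]
  ext u
  simp only [Set.mem_inter_iff, Set.mem_Ioi, Set.mem_iUnion, Set.mem_Iic, Set.mem_Ioo,
    lt_sup_iff, sup_lt_iff, max_lt_iff]
  constructor
  · rintro ⟨⟨⟨h1, _⟩, ⟨h2, _⟩⟩, _, h5⟩
    exact ⟨⟨h1, h2⟩, h5⟩
  · rintro ⟨⟨h1, h2⟩, h3⟩
    have hu0 : 0 < u := lt_trans (poisCdf_pos ha m) h1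
    have hex : ∀ l : ℝ, 0 ≤ l → ∃ k, u ≤ poisCdf l k := by
      intro l hl
      have := (tendsto_poisCdf hl).eventually_const_le h3
      exact this.exists
    exact ⟨⟨⟨h1, hex a ha⟩, ⟨h2, hex b hb⟩⟩, hu0, h3⟩

lemma unif_measure_eq {a b : ℝ} (ha : 0 ≤ a) (hb : 0 ≤ b) (m n : ℕ) :
    unif ({u : ℝ | m < qt (poisCdf a) u} ∩ {u : ℝ | n < qt (poisCdf b) u})
      = ENNReal.ofReal (min (sv a m) (sv b n)) := by
  unfold unif
  rw [Measure.restrict_apply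
    ((measurableSet_qt_gt (poisCdf_mono ha) m).inter (measurableSet_qt_gt (poisCdf_mono hb) n))]
  rw [unif_inter_eq ha hb m n, Real.volume_Ioo]
  congr 1
  unfold sv
  rcases le_total (poisCdf a m) (poisCdf b n) with h | h
  · rw [max_eq_right h, min_eq_right (by linarith)]
  · rw [max_eq_left h, min_eq_left (by linarith)]

lemma measurable_qt {F : ℕ → ℝ} (hF : Monotone F) : Measurable (qt F) := by
  apply measurable_to_countable'
  intro n
  rcases n with _ | n
  · have : qt F ⁻¹' {0} = {u : ℝ | 0 < qt F u}ᶜ := by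
      ext u; simp [Nat.pos_iff_ne_zero]
    rw [this]
    exact (measurableSet_qt_gt hF 0).compl
  · have : qt F ⁻¹' {n + 1} = {u : ℝ | n < qt F u} ∩ {u : ℝ | n + 1 < qt F u}ᶜ := by
      ext u
      simp only [Set.mem_preimage, Set.mem_singleton_iff, Set.mem_inter_iff, Set.mem_setOf_eq,
        Set.mem_compl_iff, not_lt]
      omega
    rw [this]
    exact (measurableSet_qt_gt hF n).inter (measurableSet_qt_gt hF (n + 1)).compl

lemma natCast_tsum_ennreal (N : ℕ) :
    (N : ℝ≥0∞) = ∑' m : ℕ, (if m < N then 1 else 0) := by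
  rw [tsum_eq_sum (s := Finset.range N) (by
    intro m hm
    simp only [Finset.mem_range, not_lt] at hm
    exact if_neg (by omega))]
  rw [Finset.sum_congr rfl (fun m hm => by
    simp only [Finset.mem_range] at hm
    exact if_pos hm)]
  simp

lemma lintegral_qt_mul {a b : ℝ} (ha : 0 ≤ a) (hb : 0 ≤ b) :
    ∫⁻ u, (qt (poisCdf a) u : ℝ≥0∞) * (qt (poisCdf b) u : ℝ≥0∞) ∂unif
      = ∑' m : ℕ, ∑' n : ℕ, ENNReal.ofReal (min (sv a m) (sv b n)) := by
  set A : ℕ → Set ℝ := fun m => {u : ℝ | m < qt (poisCdf a) u} with hA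
  set B : ℕ → Set ℝ := fun n => {u : ℝ | n < qt (poisCdf b) u} with hB
  have hAm : ∀ m, MeasurableSet (A m) := fun m => measurableSet_qt_gt (poisCdf_mono ha) m
  have hBm : ∀ n, MeasurableSet (B n) := fun n => measurableSet_qt_gt (poisCdf_mono hb) n
  have hpt : ∀ u : ℝ, (qt (poisCdf a) u : ℝ≥0∞) * (qt (poisCdf b) u : ℝ≥0∞)
      = ∑' m : ℕ, ∑' n : ℕ, (A m).indicator 1 u * (B n).indicator 1 u := by
    intro u
    have h1 : (qt (poisCdf a) u : ℝ≥0∞) = ∑' m : ℕ, (A m).indicator 1 u := by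
      rw [natCast_tsum_ennreal]
      exact tsum_congr (fun m => by simp [Set.indicator_apply, A])
    have h2 : (qt (poisCdf b) u : ℝ≥0∞) = ∑' n : ℕ, (B n).indicator 1 u := by
      rw [natCast_tsum_ennreal]
      exact tsum_congr (fun n => by simp [Set.indicator_apply, B])
    rw [h1, h2, ← ENNReal.tsum_mul_right]
    exact tsum_congr (fun m => (ENNReal.tsum_mul_left).symm)
  calc ∫⁻ u, (qt (poisCdf a) u : ℝ≥0∞) * (qt (poisCdf b) u : ℝ≥0∞) ∂unif
      = ∫⁻ u, ∑' m : ℕ, ∑' n : ℕ, (A m).indicator 1 u * (B n).indicator 1 u ∂unif := by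
        exact lintegral_congr (fun u => hpt u)
  _ = ∑' m : ℕ, ∫⁻ u, ∑' n : ℕ, (A m).indicator 1 u * (B n).indicator 1 u ∂unif := by
        apply lintegral_tsum
        intro m
        apply Measurable.aemeasurable
        apply Measurable.ennreal_tsum
        intro n
        exact ((measurable_one.indicator (hAm m)).mul (measurable_one.indicator (hBm n)))
  _ = ∑' m : ℕ, ∑' n : ℕ, ∫⁻ u, (A m).indicator 1 u * (B n).indicator 1 u ∂unif := by
        apply tsum_congr
        intro m
        apply lintegral_tsum
        intro n
        exact ((measurable_one.indicator (hAm m)).mul (measurable_one.indicator (hBm n))).aemeasurable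
  _ = ∑' m : ℕ, ∑' n : ℕ, ENNReal.ofReal (min (sv a m) (sv b n)) := by
        apply tsum_congr; intro m; apply tsum_congr; intro n
        have : ∀ u : ℝ, (A m).indicator 1 u * (B n).indicator 1 u
            = (A m ∩ B n).indicator (1 : ℝ → ℝ≥0∞) u := by
          intro u
          rw [← Set.inter_indicator_mul]
          simp [Set.indicator_apply]
        rw [lintegral_congr this, lintegral_indicator_one ((hAm m).inter (hBm n))]
        exact unif_measure_eq ha hb m n

lemma min_le_sqrt_mul {x y : ℝ} (hx : 0 ≤ x) (hy : 0 ≤ y) :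
    min x y ≤ Real.sqrt x * Real.sqrt y := by
  rcases le_total x y with h | h
  · rw [min_eq_left h]
    calc x = Real.sqrt x * Real.sqrt x := (Real.mul_self_sqrt hx).symm
    _ ≤ Real.sqrt x * Real.sqrt y := by
        exact mul_le_mul_of_nonneg_left (Real.sqrt_le_sqrt h) (Real.sqrt_nonneg x)
  · rw [min_eq_right h]
    calc y = Real.sqrt y * Real.sqrt y := (Real.mul_self_sqrt hy).symm
    _ ≤ Real.sqrt x * Real.sqrt y := by
        exact mul_le_mul_of_nonneg_right (Real.sqrt_le_sqrt h) (Real.sqrt_nonneg y)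

lemma summable_A {a b : ℝ} (ha : 0 ≤ a) (hb : 0 ≤ b) :
    Summable (fun m => ∑' n, min (sv a m) (sv b n)) := by
  apply Summable.of_nonneg_of_le
    (fun m => tsum_nonneg (fun n => le_min (sv_nonneg ha m) (sv_nonneg hb n)))
    (fun m => ?_) ((summable_sqrt_sv ha).mul_right (∑' n, Real.sqrt (sv b n)))
  calc ∑' n, min (sv a m) (sv b n)
      ≤ ∑' n, Real.sqrt (sv a m) * Real.sqrt (sv b n) := by
        apply Summable.tsum_le_tsum
          (fun n => min_le_sqrt_mul (sv_nonneg ha m) (sv_nonneg hb n))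
          (summable_min (sv_nonneg ha m) hb)
          ((summable_sqrt_sv hb).mul_left _)
  _ = Real.sqrt (sv a m) * ∑' n, Real.sqrt (sv b n) := tsum_mul_left

lemma integral_qt_mul {a b : ℝ} (ha : 0 ≤ a) (hb : 0 ≤ b) :
    ∫ u, (qt (poisCdf a) u : ℝ) * (qt (poisCdf b) u : ℝ) ∂unif
      = ∑' m : ℕ, ∑' n : ℕ, min (sv a m) (sv b n) := by
  have hma : Measurable fun u => (qt (poisCdf a) u : ℝ) :=
    measurable_from_top.comp (measurable_qt (poisCdf_mono ha))
  have hmb : Measurable fun u => (qt (poisCdf b) u : ℝ) :=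
    measurable_from_top.comp (measurable_qt (poisCdf_mono hb))
  rw [integral_eq_lintegral_of_nonneg_ae (f := fun u => (qt (poisCdf a) u : ℝ) * (qt (poisCdf b) u : ℝ))
    (Filter.Eventually.of_forall (fun u => by positivity))
    ((hma.mul hmb).aestronglyMeasurable)]
  have h1 : ∀ u : ℝ, ENNReal.ofReal ((qt (poisCdf a) u : ℝ) * (qt (poisCdf b) u : ℝ))
      = (qt (poisCdf a) u : ℝ≥0∞) * (qt (poisCdf b) u : ℝ≥0∞) := by
    intro u
    rw [ENNReal.ofReal_mul (by positivity), ENNReal.ofReal_natCast, ENNReal.ofReal_natCast]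
  rw [lintegral_congr h1, lintegral_qt_mul ha hb]
  have h2 : ∀ m : ℕ, ∑' n : ℕ, ENNReal.ofReal (min (sv a m) (sv b n))
      = ENNReal.ofReal (∑' n, min (sv a m) (sv b n)) := by
    intro m
    rw [ENNReal.ofReal_tsum_of_nonneg (fun n => le_min (sv_nonneg ha m) (sv_nonneg hb n))
      (summable_min (sv_nonneg ha m) hb)]
  rw [tsum_congr h2, ← ENNReal.ofReal_tsum_of_nonneg
    (fun m => tsum_nonneg (fun n => le_min (sv_nonneg ha m) (sv_nonneg hb n)))
    (summable_A ha hb)]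
  rw [ENNReal.toReal_ofReal]
  exact tsum_nonneg (fun m => tsum_nonneg (fun n => le_min (sv_nonneg ha m) (sv_nonneg hb n)))

/-- For fixed `a`, the comonotonic Poisson covariance `b ↦ cov(q_a(U), q_b(U))` is
nondecreasing in `b`. -/
theorem comonotonic_poisson_cov_mono (a b b' : ℝ) (ha : 0 ≤ a) (hb : 0 ≤ b) (hbb' : b ≤ b') :
    ∫ u, (qt (poisCdf a) u : ℝ) * (qt (poisCdf b) u : ℝ) ∂unif - a * b
      ≤ ∫ u, (qt (poisCdf a) u : ℝ) * (qt (poisCdf b') u : ℝ) ∂unif - a * b' := by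
  have hb' : 0 ≤ b' := hb.trans hbb'
  rw [integral_qt_mul ha hb, integral_qt_mul ha hb']
  rw [sub_le_sub_iff]
  have hab : ∀ c : ℝ, a * c = ∑' m : ℕ, sv a m * c := by
    intro c
    rw [tsum_mul_right, tsum_sv ha]
  rw [hab b', hab b]
  rw [← Summable.tsum_add (summable_A ha hb) ((summable_sv ha).mul_right b')]
  rw [← Summable.tsum_add (summable_A ha hb') ((summable_sv ha).mul_right b)]
  apply Summable.tsum_le_tsum _ ((summable_A ha hb).add ((summable_sv ha).mul_right b'))
    ((summable_A ha hb').add ((summable_sv ha).mul_right b))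
  intro m
  rcases eq_or_lt_of_le (sv_nonneg ha m) with hx0 | hx0
  · -- sv a m = 0
    have hz : ∀ c : ℝ, 0 ≤ c → ∑' n, min (sv a m) (sv c n) = 0 := by
      intro c hc
      rw [tsum_congr (fun n => min_eq_left (by rw [← hx0]; exact sv_nonneg hc n))]
      rw [← hx0, tsum_zero]
    rw [hz b hb, hz b' hb', ← hx0]
    simp
  · have hx1 : sv a m ≤ 1 := (sv_lt_one ha m).le
    have := key_mono' hx0 hx1 hb hbb'
    unfold hfun at this
    linarith
end
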